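/- Let q be an odd prime power ≥ 3 and p' an odd prime. Then there exists an odd prime ℓ dividing the order of PSL(2, F_{q^{p'}}) that divides neither the order of PSL(2, F_q) nor the order q^2(q^2-1)/2 of the Borel subgroup of PSL(2, F_{q^2}). -/

import Mathlib

open Finset

private lemma assemble13 (q p' ℓ : ℕ) (hq : 3 ≤ q) (hodd : Odd q)
    (hℓ : ℓ.Prime) (hℓodd : Odd ℓ)
    (hdvd : ℓ ∣ (q ^ p') ^ 2 - 1) (h1 : ¬ ℓ ∣ q) (h2 : ¬ ℓ ∣ q - 1) (h3 : ¬ ℓ ∣ q + 1) :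
    ℓ.Prime ∧ Odd ℓ ∧
      ℓ ∣ q ^ p' * ((q ^ p') ^ 2 - 1) / 2 ∧
      ¬ ℓ ∣ q * (q ^ 2 - 1) / 2 ∧
      ¬ ℓ ∣ q ^ 2 * (q ^ 2 - 1) / 2 := by
  have hq1 : 1 ≤ q := by omega
  have hfac : q ^ 2 - 1 = (q - 1) * (q + 1) := by
    zify [show 1 ≤ q ^ 2 from Nat.one_le_pow _ _ (by omega), hq1]; ring
  have hnot : ¬ ℓ ∣ q ^ 2 - 1 := by
    rw [hfac]
    intro h
    rcases (hℓ.dvd_mul).1 h with h' | h'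
    · exact h2 h'
    · exact h3 h'
  have h2d : 2 ∣ (q ^ p') ^ 2 - 1 := by
    obtain ⟨k, hk⟩ := hodd.pow (n := p')
    have hsq : (2 * k + 1) ^ 2 = 4 * k ^ 2 + 4 * k + 1 := by ring
    rw [hk, hsq]
    omega
  refine ⟨hℓ, hℓodd, ?_, ?_, ?_⟩
  · rw [Nat.mul_div_assoc _ h2d]
    refine Dvd.dvd.mul_left ?_ _
    obtain ⟨m, hm⟩ := h2d
    rw [hm, Nat.mul_div_cancel_left _ (by norm_num)]
    have hcop : Nat.Coprime ℓ 2 := (hℓ.coprime_iff_not_dvd).mpr (by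
      intro h
      have h2 := (Nat.prime_dvd_prime_iff_eq hℓ Nat.prime_two).mp h
      rw [h2] at hℓodd
      exact (by decide : ¬ Odd 2) hℓodd)
    exact Nat.Coprime.dvd_of_dvd_mul_left hcop (hm ▸ hdvd)
  · intro h
    have hN : 2 ∣ q * (q ^ 2 - 1) := by
      have : 2 ∣ q ^ 2 - 1 := by
        obtain ⟨k, hk⟩ := hodd
        have hsq : (2 * k + 1) ^ 2 = 4 * k ^ 2 + 4 * k + 1 := by ring
        rw [hk, hsq]; omega
      exact this.mul_left _
    have : ℓ ∣ q * (q ^ 2 - 1) := h.trans ⟨2, (Nat.div_mul_cancel hN).symm⟩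
    rcases (hℓ.dvd_mul).1 this with h' | h'
    · exact h1 h'
    · exact hnot h'
  · intro h
    have hN : 2 ∣ q ^ 2 * (q ^ 2 - 1) := by
      have : 2 ∣ q ^ 2 - 1 := by
        obtain ⟨k, hk⟩ := hodd
        have hsq : (2 * k + 1) ^ 2 = 4 * k ^ 2 + 4 * k + 1 := by ring
        rw [hk, hsq]; omega
      exact this.mul_left _
    have : ℓ ∣ q ^ 2 * (q ^ 2 - 1) := h.trans ⟨2, (Nat.div_mul_cancel hN).symm⟩
    rcases (hℓ.dvd_mul).1 this with h' | h'
    · exact h1 (hℓ.dvd_of_dvd_pow h')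
    · exact hnot h'

theorem stmt13 (q p' : ℕ) (hpp : IsPrimePow q) (hodd : Odd q) (hq : 3 ≤ q)
    (hp' : p'.Prime) (hp'odd : Odd p') :
    ∃ ℓ : ℕ, ℓ.Prime ∧ Odd ℓ ∧
      ℓ ∣ q ^ p' * ((q ^ p') ^ 2 - 1) / 2 ∧
      ¬ ℓ ∣ q * (q ^ 2 - 1) / 2 ∧
      ¬ ℓ ∣ q ^ 2 * (q ^ 2 - 1) / 2 := by
  have hp3 : 3 ≤ p' := by
    have h2 := hp'.two_le
    have := hp'odd
    rw [Nat.odd_iff] at this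
    omega
  have hq1 : 1 ≤ q := by omega
  have hqp1 : 1 ≤ q ^ p' := Nat.one_le_pow _ _ (by omega)
  have hqp3 : q ^ 3 ≤ q ^ p' := Nat.pow_le_pow_right (by omega) hp3
  have hq3 : 27 ≤ q ^ 3 := by
    calc (27 : ℕ) = 3 ^ 3 := by norm_num
    _ ≤ q ^ 3 := Nat.pow_le_pow_left hq 3
  -- A = (q^p' - 1)/(q - 1)
  set A : ℕ := ∑ i ∈ range p', q ^ i with hAdef
  have hAint : (A : ℤ) * ((q : ℤ) - 1) = (q : ℤ) ^ p' - 1 := by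
    have := geom_sum_mul (q : ℤ) p'
    rw [hAdef]; push_cast; exact this
  have hAdvd : A ∣ q ^ p' - 1 := by
    rw [← Int.natCast_dvd_natCast]
    push_cast [Nat.cast_sub hqp1]
    exact ⟨(q : ℤ) - 1, hAint.symm⟩
  have hA1 : 1 < A := by
    have : q ^ 1 ≤ A := Finset.single_le_sum (f := fun i => q ^ i)
      (fun i _ => Nat.zero_le _) (Finset.mem_range.mpr (by omega))
    have hqA : q ≤ A := by simpa using this
    omega
  -- B = (q^p' + 1)/(q + 1)
  set Bz : ℤ := ∑ i ∈ range p', (-(q : ℤ)) ^ i with hBzdef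
  have hBzint : Bz * ((q : ℤ) + 1) = (q : ℤ) ^ p' + 1 := by
    have h := geom_sum_mul (-(q : ℤ)) p'
    rw [← hBzdef] at h
    rw [Odd.neg_pow hp'odd] at h
    linarith [h]
  have hBzpos : 0 < Bz := by
    nlinarith [hBzint, show (0:ℤ) < (q:ℤ) ^ p' + 1 by positivity,
      show (0:ℤ) < (q:ℤ) + 1 by exact_mod_cast Nat.succ_pos q]
  set B : ℕ := Bz.toNat with hBdef
  have hBcast : (B : ℤ) = Bz := Int.toNat_of_nonneg hBzpos.le
  have hBint : (B : ℤ) * ((q : ℤ) + 1) = (q : ℤ) ^ p' + 1 := by rw [hBcast]; exact hBzint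
  have hBdvd : B ∣ q ^ p' + 1 := by
    rw [← Int.natCast_dvd_natCast]
    push_cast
    exact ⟨(q : ℤ) + 1, hBint.symm⟩
  have hB1 : 1 < B := by
    by_contra hB
    push_neg at hB
    have : (B : ℤ) ≤ 1 := by exact_mod_cast hB
    nlinarith [hBint, show (27 : ℤ) ≤ (q:ℤ)^p' by exact_mod_cast le_trans hq3 hqp3,
      show (3:ℤ) ≤ (q:ℤ) by exact_mod_cast hq]
  -- parities
  have hq2 : (q : ZMod 2) = 1 := by
    rw [← ZMod.natCast_mod, Nat.odd_iff.mp hodd, Nat.cast_one]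
  have hp2 : ((p' : ℕ) : ZMod 2) = 1 := by
    rw [← ZMod.natCast_mod, Nat.odd_iff.mp hp'odd, Nat.cast_one]
  have hAodd : Odd A := by
    have hA2 : (A : ZMod 2) = 1 := by
      rw [hAdef]; push_cast
      rw [Finset.sum_congr rfl (fun i _ => by rw [hq2, one_pow])]
      simpa using hp2
    rw [← Nat.not_even_iff_odd]
    intro he
    rw [(ZMod.natCast_eq_zero_iff A 2).mpr he.two_dvd] at hA2
    exact absurd hA2 (by decide)
  have hBodd : Odd B := by
    have hB2 : (B : ZMod 2) = 1 := by
      have : ((Bz : ℤ) : ZMod 2) = 1 := by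
        rw [hBzdef]; push_cast
        rw [Finset.sum_congr rfl (fun i _ => by
          rw [show (-(q : ZMod 2)) = 1 by rw [hq2]; decide])]
        simpa using hp2
      rw [← this, ← hBcast, Int.cast_natCast]
    rw [← Nat.not_even_iff_odd]
    intro he
    rw [(ZMod.natCast_eq_zero_iff B 2).mpr he.two_dvd] at hB2
    exact absurd hB2 (by decide)
  by_cases hcase : p' ∣ A
  · -- use B
    have hp'B : ¬ p' ∣ B := by
      intro h
      have h1 : p' ∣ q ^ p' - 1 := dvd_trans hcase hAdvd
      have h2 : p' ∣ q ^ p' + 1 := dvd_trans h hBdvd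
      have := Nat.dvd_sub h2 h1
      rw [show q ^ p' + 1 - (q ^ p' - 1) = 2 by omega] at this
      have := Nat.le_of_dvd (by norm_num) this
      omega
    set ℓ := B.minFac with hℓdef
    have hℓp : ℓ.Prime := Nat.minFac_prime (by omega)
    have hℓB : ℓ ∣ B := Nat.minFac_dvd B
    have hℓodd : Odd ℓ := by
      rcases hℓp.eq_two_or_odd' with h | h
      · exfalso; rw [h] at hℓB; exact (Nat.not_even_iff_odd.mpr hBodd) (even_iff_two_dvd.mpr hℓB)
      · exact h
    haveI := Fact.mk hℓp
    have hℓqp : ℓ ∣ q ^ p' + 1 := hℓB.trans hBdvd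
    have hℓnq : ¬ ℓ ∣ q := by
      intro h
      have h1 : ℓ ∣ q ^ p' := dvd_pow h (by omega)
      have := Nat.dvd_sub hℓqp h1
      rw [show q ^ p' + 1 - q ^ p' = 1 by omega] at this
      exact hℓp.ne_one (Nat.dvd_one.mp this)
    have hℓB0 : (B : ZMod ℓ) = 0 := (ZMod.natCast_eq_zero_iff B ℓ).mpr hℓB
    refine ⟨ℓ, assemble13 q p' ℓ hq hodd hℓp hℓodd ?_ hℓnq ?_ ?_⟩
    · have : q ^ p' + 1 ∣ (q ^ p') ^ 2 - 1 := by
        have : (q ^ p') ^ 2 - 1 = (q ^ p' - 1) * (q ^ p' + 1) := by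
          zify [show 1 ≤ (q ^ p') ^ 2 from Nat.one_le_pow _ _ (by omega), hqp1]; ring
        rw [this]; exact Dvd.intro_left _ rfl
      exact hℓqp.trans this
    · intro h
      have hq1' : (q : ZMod ℓ) = 1 := by
        have := (ZMod.natCast_eq_zero_iff (q - 1) ℓ).mpr h
        rw [Nat.cast_sub hq1] at this
        push_cast at this
        linear_combination this
      have hBz2 : (B : ZMod ℓ) * ((q : ZMod ℓ) + 1) = (q : ZMod ℓ) ^ p' + 1 := by
        have := congrArg (fun x : ℤ => (x : ZMod ℓ)) hBint
        push_cast at this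
        exact this
      rw [hℓB0, hq1', zero_mul, one_pow] at hBz2
      have h2 : ((2 : ℕ) : ZMod ℓ) = 0 := by push_cast; linear_combination -hBz2
      have := (ZMod.natCast_eq_zero_iff 2 ℓ).mp h2
      have := (Nat.prime_dvd_prime_iff_eq hℓp Nat.prime_two).mp this
      rw [this] at hℓodd
      exact (by decide : ¬ Odd 2) hℓodd
    · intro h
      have hqm1 : (q : ZMod ℓ) = -1 := by
        have := (ZMod.natCast_eq_zero_iff (q + 1) ℓ).mpr h
        push_cast at this
        linear_combination this
      have hBp : (B : ZMod ℓ) = (p' : ZMod ℓ) := by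
        have : ((Bz : ℤ) : ZMod ℓ) = (p' : ZMod ℓ) := by
          rw [hBzdef]; push_cast
          rw [Finset.sum_congr rfl (fun i _ => by rw [hqm1, neg_neg, one_pow])]
          simp
        rw [← this, ← hBcast, Int.cast_natCast]
      rw [hℓB0] at hBp
      have := (ZMod.natCast_eq_zero_iff p' ℓ).mp hBp.symm
      have hℓp' : ℓ = p' := (Nat.prime_dvd_prime_iff_eq hℓp hp').mp this
      exact hp'B (hℓp' ▸ hℓB)
  · -- use A
    set ℓ := A.minFac with hℓdef
    have hℓp : ℓ.Prime := Nat.minFac_prime (by omega)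
    have hℓA : ℓ ∣ A := Nat.minFac_dvd A
    have hℓodd : Odd ℓ := by
      rcases hℓp.eq_two_or_odd' with h | h
      · exfalso; rw [h] at hℓA; exact (Nat.not_even_iff_odd.mpr hAodd) (even_iff_two_dvd.mpr hℓA)
      · exact h
    haveI := Fact.mk hℓp
    have hℓqp : ℓ ∣ q ^ p' - 1 := hℓA.trans hAdvd
    have hℓnq : ¬ ℓ ∣ q := by
      intro h
      have h1 : ℓ ∣ q ^ p' := dvd_pow h (by omega)
      have := Nat.dvd_sub h1 hℓqp
      rw [show q ^ p' - (q ^ p' - 1) = 1 by omega] at this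
      exact hℓp.ne_one (Nat.dvd_one.mp this)
    have hℓA0 : (A : ZMod ℓ) = 0 := (ZMod.natCast_eq_zero_iff A ℓ).mpr hℓA
    refine ⟨ℓ, assemble13 q p' ℓ hq hodd hℓp hℓodd ?_ hℓnq ?_ ?_⟩
    · have : q ^ p' - 1 ∣ (q ^ p') ^ 2 - 1 := by
        have : (q ^ p') ^ 2 - 1 = (q ^ p' - 1) * (q ^ p' + 1) := by
          zify [show 1 ≤ (q ^ p') ^ 2 from Nat.one_le_pow _ _ (by omega), hqp1]; ring
        rw [this]; exact Dvd.intro _ rfl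
      exact hℓqp.trans this
    · intro h
      have hq1' : (q : ZMod ℓ) = 1 := by
        have := (ZMod.natCast_eq_zero_iff (q - 1) ℓ).mpr h
        rw [Nat.cast_sub hq1] at this
        push_cast at this
        linear_combination this
      have hAp : (A : ZMod ℓ) = (p' : ZMod ℓ) := by
        rw [hAdef]; push_cast
        rw [Finset.sum_congr rfl (fun i _ => by rw [hq1', one_pow])]
        simp
      rw [hℓA0] at hAp
      have := (ZMod.natCast_eq_zero_iff p' ℓ).mp hAp.symm
      have hℓp' : ℓ = p' := (Nat.prime_dvd_prime_iff_eq hℓp hp').mp this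
      exact hcase (hℓp' ▸ hℓA)
    · intro h
      have hqm1 : (q : ZMod ℓ) = -1 := by
        have := (ZMod.natCast_eq_zero_iff (q + 1) ℓ).mpr h
        push_cast at this
        linear_combination this
      have hA1' : (A : ZMod ℓ) = 1 := by
        rw [hAdef]; push_cast
        rw [Finset.sum_congr rfl (fun i _ => by rw [hqm1])]
        rw [neg_one_geom_sum, if_neg (Nat.not_even_iff_odd.mpr hp'odd)]
      rw [hℓA0] at hA1'
      exact zero_ne_one hA1'
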